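/- Let K ≥ 2, let X be uniformly distributed on 𝒳={1,…,K}, let Y be generated by a channel with p(y|x)>0 for all x,y∈𝒳, let f:𝒳→{1,…,M} be an encoder and g:{1,…,M}×𝒳→𝒳 a decoder, and let D = Σ_{x,y} (1/K)·p(y|x)·1{g(f(x),y)≠x} be the Hamming distortion of the code, assumed to satisfy 0 < D < 1. Then for every α with 1<α<2: K^{α−1}·[ (1−D)^α + D^α/(K−1)^{α−1} ] ≤ M^{α−1}·Σ_y ( Σ_x (1/K)·p(y|x)^{1/(2−α)} )^{2−α}. -/

import Mathlib

open Finset Real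

private lemma pow_mean_lower {ι : Type*} (s : Finset ι) (t : ι → ℝ) (α : ℝ) (hα : 1 ≤ α)
    (ht : ∀ i ∈ s, 0 ≤ t i) :
    (∑ i ∈ s, t i) ^ α ≤ (s.card : ℝ) ^ (α - 1) * ∑ i ∈ s, t i ^ α := by
  rcases s.eq_empty_or_nonempty with rfl | hs
  · simp [Real.zero_rpow (by linarith : α ≠ 0)]
  · set n : ℝ := (s.card : ℝ) with hn'
    have hn : (0:ℝ) < n := Nat.cast_pos.2 (card_pos.2 hs)
    have hst : 0 ≤ ∑ i ∈ s, t i := Finset.sum_nonneg ht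
    have j : n⁻¹ ^ α * (∑ i ∈ s, t i) ^ α ≤ n⁻¹ * ∑ i ∈ s, t i ^ α := by
      have h := Real.rpow_arith_mean_le_arith_mean_rpow s (fun _ => n⁻¹) t
        (fun i _ => by positivity) (by rw [Finset.sum_const, nsmul_eq_mul, ← hn']; exact mul_inv_cancel₀ hn.ne') ht hα
      rwa [← Finset.mul_sum, ← Finset.mul_sum, Real.mul_rpow (by positivity) hst] at h
    have e1 : (∑ i ∈ s, t i) ^ α = n ^ α * (n⁻¹ ^ α * (∑ i ∈ s, t i) ^ α) := by
      rw [← mul_assoc, ← Real.mul_rpow hn.le (by positivity), mul_inv_cancel₀ hn.ne',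
        Real.one_rpow, one_mul]
    have e2 : n ^ (α - 1) * ∑ i ∈ s, t i ^ α = n ^ α * (n⁻¹ * ∑ i ∈ s, t i ^ α) := by
      rw [← mul_assoc, ← Real.rpow_neg_one n, ← Real.rpow_add hn]
      ring_nf
    rw [e1, e2]
    exact mul_le_mul_of_nonneg_left j (Real.rpow_nonneg hn.le _)

private lemma pow_mean_upper {ι : Type*} (s : Finset ι) (t : ι → ℝ) (β : ℝ) (hβ0 : 0 < β)
    (hβ1 : β ≤ 1) (ht : ∀ i ∈ s, 0 ≤ t i) :
    ∑ i ∈ s, t i ^ β ≤ (s.card : ℝ) ^ (1 - β) * (∑ i ∈ s, t i) ^ β := by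
  have h1 : (1:ℝ) ≤ 1/β := by rw [le_div_iff₀ hβ0]; linarith
  have hb : ∀ i ∈ s, 0 ≤ t i ^ β := fun i hi => Real.rpow_nonneg (ht i hi) β
  have h := pow_mean_lower s (fun i => t i ^ β) (1/β) h1 hb
  have hsb : 0 ≤ ∑ i ∈ s, t i ^ β := Finset.sum_nonneg hb
  have e : ∀ i ∈ s, (t i ^ β) ^ (1/β : ℝ) = t i := by
    intro i hi
    rw [← Real.rpow_mul (ht i hi), mul_one_div, div_self hβ0.ne', Real.rpow_one]
  rw [Finset.sum_congr rfl e] at h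
  -- h : (∑ t^β) ^ (1/β) ≤ card ^ (1/β - 1) * ∑ t
  have hmono := Real.rpow_le_rpow (Real.rpow_nonneg hsb _) h hβ0.le
  rw [← Real.rpow_mul hsb, one_div, inv_mul_cancel₀ hβ0.ne', Real.rpow_one] at hmono
  refine hmono.trans_eq ?_
  rw [Real.mul_rpow (by positivity) (Finset.sum_nonneg ht), ← Real.rpow_mul (by positivity)]
  congr 2
  field_simp

/-- superadditivity: `(∑a)^α (∑b)^{1-α} ≤ ∑ aᵢ^α bᵢ^{1-α}` for `0 ≤ a ≤ b`, `1 < α`. -/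
private lemma superadd {ι : Type*} (s : Finset ι) (a b : ι → ℝ) (α : ℝ) (hα : 1 < α)
    (ha : ∀ i ∈ s, 0 ≤ a i) (hab : ∀ i ∈ s, a i ≤ b i) :
    (∑ i ∈ s, a i) ^ α * (∑ i ∈ s, b i) ^ (1 - α) ≤ ∑ i ∈ s, a i ^ α * b i ^ (1 - α) := by
  have hb : ∀ i ∈ s, 0 ≤ b i := fun i hi => (ha i hi).trans (hab i hi)
  have hB : 0 ≤ ∑ i ∈ s, b i := Finset.sum_nonneg hb
  rcases eq_or_lt_of_le hB with hB0 | hB0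
  · -- all zero
    have hbz : ∀ i ∈ s, b i = 0 := by
      intro i hi
      exact le_antisymm (hB0 ▸ Finset.single_le_sum hb hi) (hb i hi)
    have haz : ∀ i ∈ s, a i = 0 := fun i hi =>
      le_antisymm ((hab i hi).trans_eq (hbz i hi)) (ha i hi)
    rw [Finset.sum_congr rfl haz, Finset.sum_congr rfl hbz]
    simp only [Finset.sum_const_zero, Real.zero_rpow (by linarith : α ≠ 0), zero_mul]
    exact Finset.sum_nonneg fun i hi =>
      mul_nonneg (Real.rpow_nonneg (ha i hi) _) (Real.rpow_nonneg (hb i hi) _)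
  · set B : ℝ := ∑ i ∈ s, b i with hBdef
    have hA : 0 ≤ ∑ i ∈ s, a i := Finset.sum_nonneg ha
    set A : ℝ := ∑ i ∈ s, a i with hAdef
    have key : ∀ i ∈ s, (b i / B) * (a i / b i) = a i / B := by
      intro i hi
      rcases eq_or_lt_of_le (hb i hi) with h0 | h0
      · have : a i = 0 := le_antisymm ((hab i hi).trans_eq h0.symm) (ha i hi)
        simp [← h0, this]
      · field_simp
    have j := Real.rpow_arith_mean_le_arith_mean_rpow s (fun i => b i / B) (fun i => a i / b i)
      (fun i hi => by have := hb i hi; positivity)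
      (by rw [← Finset.sum_div, div_self hB0.ne'])
      (fun i hi => by
        rcases eq_or_lt_of_le (hb i hi) with h0 | h0
        · simp [← h0]
        · exact div_nonneg (ha i hi) (hb i hi)) hα.le
    rw [Finset.sum_congr rfl key, ← Finset.sum_div] at j
    -- j : (A / B) ^ α ≤ ∑ (b i / B) * (a i / b i) ^ α
    have e : ∀ i ∈ s, (b i / B) * (a i / b i) ^ α = (a i ^ α * b i ^ (1-α)) / B := by
      intro i hi
      rcases eq_or_lt_of_le (hb i hi) with h0 | h0
      · have haz : a i = 0 := le_antisymm ((hab i hi).trans_eq h0.symm) (ha i hi)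
        simp [← h0, haz, Real.zero_rpow (by linarith : α ≠ 0)]
      · rw [Real.div_rpow (ha i hi) (hb i hi), Real.rpow_sub h0, Real.rpow_one]
        field_simp
    rw [Finset.sum_congr rfl e, ← Finset.sum_div, Real.div_rpow hA hB0.le] at j
    -- j : A^α / B^α ≤ (∑ aᵢ^α bᵢ^{1-α}) / B
    rw [div_le_div_iff₀ (by positivity) hB0] at j
    -- j : A^α * B ≤ (∑ ...) * B^α
    rw [Real.rpow_sub hB0, Real.rpow_one, ← mul_div_assoc,
      div_le_iff₀ (Real.rpow_pos_of_pos hB0 α)]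
    exact j

/-- Hölder step: `∑ pᵢ qᵢ^α ≤ (∑ pᵢqᵢ)^{α-1} (∑ pᵢ qᵢ^{1/(2-α)})^{2-α}`. -/
private lemma holder_step {ι : Type*} (s : Finset ι) (p q : ι → ℝ) (α : ℝ) (hα1 : 1 < α)
    (hα2 : α < 2) (hp : ∀ i ∈ s, 0 ≤ p i) (hq : ∀ i ∈ s, 0 ≤ q i) :
    ∑ i ∈ s, p i * q i ^ α
      ≤ (∑ i ∈ s, p i * q i) ^ (α-1) * (∑ i ∈ s, p i * q i ^ (1/(2-α))) ^ (2-α) := by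
  have h2α : (0:ℝ) < 2 - α := by linarith
  have hβ : (1:ℝ) ≤ 1/(2-α) := by rw [le_div_iff₀ h2α]; linarith
  have hS : 0 ≤ ∑ i ∈ s, p i * q i :=
    Finset.sum_nonneg fun i hi => mul_nonneg (hp i hi) (hq i hi)
  rcases eq_or_lt_of_le hS with hS0 | hS0
  · -- S = 0 : both sides are zero
    have hz : ∀ i ∈ s, p i * q i = 0 := by
      intro i hi
      exact le_antisymm
        (hS0 ▸ Finset.single_le_sum (fun j hj => mul_nonneg (hp j hj) (hq j hj)) hi)
        (mul_nonneg (hp i hi) (hq i hi))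
    have hLHS : ∑ i ∈ s, p i * q i ^ α = 0 := by
      refine Finset.sum_eq_zero fun i hi => ?_
      rcases mul_eq_zero.1 (hz i hi) with h | h
      · rw [h, zero_mul]
      · rw [h, Real.zero_rpow (by linarith : α ≠ 0), mul_zero]
    rw [hLHS, ← hS0, Real.zero_rpow (by linarith : α - 1 ≠ 0), zero_mul]
  · set S : ℝ := ∑ i ∈ s, p i * q i with hSdef
    set β : ℝ := 1/(2-α) with hβdef
    have key := Real.arith_mean_le_rpow_mean s (fun i => p i * q i / S) (fun i => q i ^ (α-1))
      (fun i hi => div_nonneg (mul_nonneg (hp i hi) (hq i hi)) hS)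
      (by rw [← Finset.sum_div, div_self hS0.ne'])
      (fun i hi => Real.rpow_nonneg (hq i hi) _) hβ
    have e1 : ∀ i ∈ s, (p i * q i / S) * q i ^ (α-1) = (p i * q i ^ α) / S := by
      intro i hi
      rcases eq_or_lt_of_le (hq i hi) with h0 | h0
      · rw [← h0, Real.zero_rpow (by linarith : α ≠ 0), Real.zero_rpow
          (by linarith : α - 1 ≠ 0)]
        ring
      · rw [show α = 1 + (α - 1) by ring, Real.rpow_add h0, Real.rpow_one]
        ring
    have e2 : ∀ i ∈ s, (p i * q i / S) * (q i ^ (α-1)) ^ β = (p i * q i ^ β) / S := by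
      intro i hi
      rcases eq_or_lt_of_le (hq i hi) with h0 | h0
      · simp [← h0, Real.zero_rpow (show β ≠ 0 by positivity),
          Real.zero_rpow (show α - 1 ≠ 0 by linarith)]
      · have hexp : 1 + (α - 1) * β = β := by
          rw [hβdef]; field_simp; ring
        have hq2 : q i ^ β = q i * q i ^ ((α-1) * β) := by
          nth_rewrite 1 [← hexp]
          rw [Real.rpow_add h0, Real.rpow_one]
        rw [← Real.rpow_mul h0.le, hq2]
        ring
    rw [Finset.sum_congr rfl e1, Finset.sum_congr rfl e2, ← Finset.sum_div, ← Finset.sum_div]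
      at key
    have h1β : (1/β : ℝ) = 2 - α := by rw [hβdef, one_div_one_div]
    rw [h1β] at key
    set T : ℝ := ∑ i ∈ s, p i * q i ^ β with hTdef
    have hT : 0 ≤ T :=
      Finset.sum_nonneg fun i hi => mul_nonneg (hp i hi) (Real.rpow_nonneg (hq i hi) _)
    rw [div_le_iff₀ hS0] at key
    have hfe : S ^ (α-1) * T ^ (2-α) = (T/S)^(2-α) * S := by
      rw [Real.div_rpow hT hS0.le, show (α - 1 : ℝ) = 1 - (2-α) by ring,
        Real.rpow_sub hS0, Real.rpow_one]
      ring
    calc ∑ i ∈ s, p i * q i ^ α ≤ (T/S)^(2-α) * S := key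
      _ = S ^ (α-1) * T ^ (2-α) := hfe.symm

/-- Main distortion lower bound for scalar Wyner–Ziv codes: for a uniform source,
Hamming distortion `D` of the code `(f,g)`, and `1 < α < 2`,
`K^{α-1}[(1-D)^α + D^α/(K-1)^{α-1}] ≤ M^{α-1} Σ_y (Σ_x (1/K) p(y|x)^{1/(2-α)})^{2-α}`. -/
theorem stmt_19 (K M : ℕ) (hK : 2 ≤ K) (hM : 0 < M)
    (W : Fin K → Fin K → ℝ) (hW : ∀ x y, 0 < W x y) (hWsum : ∀ x, ∑ y, W x y = 1)
    (f : Fin K → Fin M) (g : Fin M → Fin K → Fin K)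
    (D : ℝ)
    (hD : D = ∑ x, ∑ y, (1/(K:ℝ)) * W x y * (if g (f x) y ≠ x then 1 else 0))
    (hD0 : 0 < D) (hD1 : D < 1)
    (α : ℝ) (hα1 : 1 < α) (hα2 : α < 2) :
    (K:ℝ) ^ (α - 1) * ((1 - D) ^ α + D ^ α / ((K:ℝ) - 1) ^ (α - 1))
      ≤ (M:ℝ) ^ (α - 1) * ∑ y, (∑ x, (1/(K:ℝ)) * (W x y) ^ (1/(2-α))) ^ (2-α) := by
  have hK0 : (0:ℝ) < (K:ℝ) := by
    have : (0:ℕ) < K := by omega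
    exact_mod_cast this
  have hK1 : (1:ℝ) ≤ (K:ℝ) - 1 := by
    have : (2:ℝ) ≤ (K:ℝ) := by exact_mod_cast hK
    linarith
  have h2α : (0:ℝ) < 2 - α := by linarith
  have hβpos : (0:ℝ) < 1/(2-α) := by positivity
  -- the joint distribution of (X, (Y,Z)) and its (Y,Z)-marginal
  set q : Fin K → Fin K × Fin M → ℝ :=
    fun x v => 1/(K:ℝ) * W x v.1 * (if f x = v.2 then 1 else 0) with hq
  set pV : Fin K × Fin M → ℝ := fun v => ∑ x, q x v with hpV
  -- the joint distribution of (X, X̂) and the X̂-marginal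
  set J : Fin K → Fin K → ℝ :=
    fun x xh => ∑ y, 1/(K:ℝ) * W x y * (if g (f x) y = xh then 1 else 0) with hJ
  set P : Fin K → ℝ := fun xh => ∑ x, J x xh with hP
  have hqnn : ∀ x v, 0 ≤ q x v := by
    intro x v
    simp only [hq]
    have := (hW x v.1).le
    positivity
  have hpVnn : ∀ v, 0 ≤ pV v := fun v => Finset.sum_nonneg fun x _ => hqnn x v
  have hqle : ∀ x v, q x v ≤ pV v := by
    intro x v
    exact Finset.single_le_sum (fun i (_ : i ∈ univ) => hqnn i v) (mem_univ x)
  have hJnn : ∀ x xh, 0 ≤ J x xh := by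
    intro x xh
    refine Finset.sum_nonneg fun y _ => ?_
    have := (hW x y).le
    positivity
  have hPnn : ∀ xh, 0 ≤ P xh := fun xh => Finset.sum_nonneg fun x _ => hJnn x xh
  have hJleP : ∀ x xh, J x xh ≤ P xh := by
    intro x xh
    exact Finset.single_le_sum (fun i (_ : i ∈ univ) => hJnn i xh) (mem_univ x)
  -- total mass 1
  have hTot : ∑ x, ∑ y, 1/(K:ℝ) * W x y = 1 := by
    have e : ∀ x : Fin K, ∑ y, 1/(K:ℝ) * W x y = 1/(K:ℝ) := by
      intro x
      rw [← Finset.mul_sum, hWsum, mul_one]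
    rw [Finset.sum_congr rfl fun x _ => e x, Finset.sum_const, card_univ, Fintype.card_fin,
      nsmul_eq_mul]
    field_simp
  have hPsum : ∑ xh, P xh = 1 := by
    simp only [hP, hJ]
    rw [Finset.sum_comm]
    have e : ∀ x : Fin K,
        (∑ xh, ∑ y, 1/(K:ℝ) * W x y * (if g (f x) y = xh then 1 else 0))
          = ∑ y, 1/(K:ℝ) * W x y := by
      intro x
      rw [Finset.sum_comm]
      refine Finset.sum_congr rfl fun y _ => ?_
      simp [mul_ite, Finset.sum_ite_eq]
    rw [Finset.sum_congr rfl fun x _ => e x, hTot]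
  -- diagonal mass is 1 - D
  have hdiag : ∑ x, J x x = 1 - D := by
    have e : ∀ (x : Fin K) (y : Fin K),
        1/(K:ℝ) * W x y * (if g (f x) y ≠ x then 1 else 0)
          = 1/(K:ℝ) * W x y - 1/(K:ℝ) * W x y * (if g (f x) y = x then 1 else 0) := by
      intro x y
      by_cases h : g (f x) y = x <;> simp [h]
    rw [hD]
    simp only [hJ]
    rw [Finset.sum_congr rfl fun x _ => Finset.sum_congr rfl fun y _ => e x y]
    simp only [Finset.sum_sub_distrib]
    rw [hTot]
    ring
  -- off-diagonal mass per xh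
  set S : Fin K → ℝ := fun xh => ∑ x ∈ univ.erase xh, J x xh with hS
  have hPS : ∀ xh, P xh = J xh xh + S xh := by
    intro xh
    simp only [hP, hS]
    exact (Finset.add_sum_erase _ _ (mem_univ xh)).symm
  have hSnn : ∀ xh, 0 ≤ S xh := fun xh => Finset.sum_nonneg fun x _ => hJnn x xh
  have hSsum : ∑ xh, S xh = D := by
    have h1 : ∑ xh, P xh = ∑ xh, J xh xh + ∑ xh, S xh := by
      rw [← Finset.sum_add_distrib]
      exact Finset.sum_congr rfl fun xh _ => hPS xh
    rw [hPsum, hdiag] at h1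
    linarith
  have hSleP : ∀ xh, S xh ≤ P xh := by
    intro xh
    rw [hPS xh]
    have := hJnn xh xh
    linarith
  ------------------------------------------------------------------
  -- STEP A : rate-distortion converse
  ------------------------------------------------------------------
  have cardE : ∀ xh : Fin K, ((univ.erase xh).card : ℝ) = (K:ℝ) - 1 := by
    intro xh
    rw [Finset.card_erase_of_mem (mem_univ xh), card_univ, Fintype.card_fin]
    have h1 : 1 ≤ K := by omega
    push_cast [h1]
    ring
  have stepA : (1-D)^α + ((K:ℝ)-1)^(1-α) * D^α
      ≤ ∑ xh, ∑ x, (J x xh)^α * (P xh)^(1-α) := by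
    have perxh : ∀ xh : Fin K,
        (J xh xh)^α * (P xh)^(1-α) + ((K:ℝ)-1)^(1-α) * ((S xh)^α * (P xh)^(1-α))
          ≤ ∑ x, (J x xh)^α * (P xh)^(1-α) := by
      intro xh
      rw [← Finset.sum_mul]
      rw [show (∑ x, (J x xh)^α) = (J xh xh)^α + ∑ x ∈ univ.erase xh, (J x xh)^α from
        (Finset.add_sum_erase _ _ (mem_univ xh)).symm]
      have pm := pow_mean_lower (univ.erase xh) (fun x => J x xh) α hα1.le
        (fun x _ => hJnn x xh)
      rw [cardE xh] at pm
      have hKm1 : (0:ℝ) < (K:ℝ) - 1 := by linarith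
      have pm2 : ((K:ℝ)-1)^(1-α) * (S xh)^α ≤ ∑ x ∈ univ.erase xh, (J x xh)^α := by
        have h1 := mul_le_mul_of_nonneg_left pm (Real.rpow_nonneg hKm1.le (1-α))
        calc ((K:ℝ)-1)^(1-α) * (S xh)^α
            ≤ ((K:ℝ)-1)^(1-α) * (((K:ℝ)-1)^(α-1) * ∑ x ∈ univ.erase xh, (J x xh)^α) := h1
          _ = ∑ x ∈ univ.erase xh, (J x xh)^α := by
              rw [← mul_assoc, ← Real.rpow_add hKm1]
              norm_num
      have hPnn' : (0:ℝ) ≤ (P xh)^(1-α) := Real.rpow_nonneg (hPnn xh) _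
      have h2 := mul_le_mul_of_nonneg_right pm2 hPnn'
      nlinarith [h2]
    calc (1-D)^α + ((K:ℝ)-1)^(1-α) * D^α
        = (∑ xh, J xh xh)^α * (∑ xh, P xh)^(1-α)
            + ((K:ℝ)-1)^(1-α) * ((∑ xh, S xh)^α * (∑ xh, P xh)^(1-α)) := by
          rw [hPsum, hdiag, hSsum, Real.one_rpow]
          ring
      _ ≤ (∑ xh, (J xh xh)^α * (P xh)^(1-α))
            + ((K:ℝ)-1)^(1-α) * (∑ xh, (S xh)^α * (P xh)^(1-α)) := by
          have s1 := superadd univ (fun xh => J xh xh) P α hα1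
            (fun xh _ => hJnn xh xh) (fun xh _ => hJleP xh xh)
          have s2 := superadd univ S P α hα1 (fun xh _ => hSnn xh) (fun xh _ => hSleP xh)
          have hc : (0:ℝ) ≤ ((K:ℝ)-1)^(1-α) := Real.rpow_nonneg (by linarith) _
          have s2' := mul_le_mul_of_nonneg_left s2 hc
          linarith [s1, s2']
      _ = ∑ xh, ((J xh xh)^α * (P xh)^(1-α) + ((K:ℝ)-1)^(1-α) * ((S xh)^α * (P xh)^(1-α))) := by
          rw [Finset.sum_add_distrib, Finset.mul_sum]
      _ ≤ ∑ xh, ∑ x, (J x xh)^α * (P xh)^(1-α) :=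
          Finset.sum_le_sum fun xh _ => perxh xh
  ------------------------------------------------------------------
  -- STEP B : data processing over the fibers of (y,z) ↦ g z y
  ------------------------------------------------------------------
  have hJfib : ∀ x xh, J x xh
      = ∑ v ∈ univ.filter (fun v : Fin K × Fin M => g v.2 v.1 = xh), q x v := by
    intro x xh
    rw [Finset.sum_filter, Fintype.sum_prod_type]
    simp only [hJ]
    refine Finset.sum_congr rfl fun y _ => ?_
    have e : ∀ z : Fin M,
        (if g z y = xh then q x (y, z) else 0)
          = if f x = z then (if g z y = xh then 1/(K:ℝ) * W x y else 0) else 0 := by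
      intro z
      by_cases h1 : f x = z <;> by_cases h2 : g z y = xh <;> simp [hq, h1, h2]
    rw [Finset.sum_congr rfl fun z _ => e z, Finset.sum_ite_eq]
    by_cases h2 : g (f x) y = xh <;> simp [h2]
  have hPfib : ∀ xh, P xh
      = ∑ v ∈ univ.filter (fun v : Fin K × Fin M => g v.2 v.1 = xh), pV v := by
    intro xh
    simp only [hP]
    rw [Finset.sum_congr rfl fun x (_ : x ∈ univ) => hJfib x xh, Finset.sum_comm]
  have stepB : ∑ xh, ∑ x, (J x xh)^α * (P xh)^(1-α)
      ≤ ∑ x, ∑ v : Fin K × Fin M, (q x v)^α * (pV v)^(1-α) := by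
    rw [Finset.sum_comm]
    refine Finset.sum_le_sum fun x _ => ?_
    calc ∑ xh, (J x xh)^α * (P xh)^(1-α)
        ≤ ∑ xh, ∑ v ∈ univ.filter (fun v : Fin K × Fin M => g v.2 v.1 = xh),
            (q x v)^α * (pV v)^(1-α) := by
          refine Finset.sum_le_sum fun xh _ => ?_
          rw [hJfib x xh, hPfib xh]
          exact superadd _ (q x) pV α hα1 (fun v _ => hqnn x v) (fun v _ => hqle x v)
      _ = ∑ v : Fin K × Fin M, (q x v)^α * (pV v)^(1-α) :=
          Finset.sum_fiberwise _ _ _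
  ------------------------------------------------------------------
  -- STEP C : capacity Hölder bound
  ------------------------------------------------------------------
  set G : Fin K × Fin M → ℝ :=
    fun v => (∑ x, 1/(K:ℝ) * (W x v.1 * (if f x = v.2 then 1 else 0)) ^ (1/(2-α)))^(2-α)
    with hG
  have hGnn : ∀ v, 0 ≤ G v := by
    intro v
    simp only [hG]
    refine Real.rpow_nonneg (Finset.sum_nonneg fun x _ => ?_) _
    have h1 : (0:ℝ) ≤ W x v.1 * (if f x = v.2 then 1 else 0) := by
      have := (hW x v.1).le
      by_cases h : f x = v.2 <;> simp [h, this]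
    have := Real.rpow_nonneg h1 (1/(2-α))
    positivity
  have hKsplit : ((1:ℝ)/(K:ℝ))^α = (1/(K:ℝ))^(α-1) * (1/(K:ℝ)) := by
    nth_rewrite 3 [← Real.rpow_one (1/(K:ℝ))]
    rw [← Real.rpow_add (by positivity : (0:ℝ) < 1/(K:ℝ))]
    norm_num
  have stepC : ∑ x, ∑ v : Fin K × Fin M, (q x v)^α * (pV v)^(1-α)
      ≤ (K:ℝ)^(1-α) * ∑ v : Fin K × Fin M, G v := by
    rw [Finset.sum_comm, Finset.mul_sum]
    refine Finset.sum_le_sum fun v _ => ?_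
    set r : Fin K → ℝ := fun x => W x v.1 * (if f x = v.2 then 1 else 0) with hr
    have hrnn : ∀ x, 0 ≤ r x := by
      intro x
      simp only [hr]
      have := (hW x v.1).le
      by_cases h : f x = v.2 <;> simp [h, this]
    have hqr : ∀ x, q x v = 1/(K:ℝ) * r x := by
      intro x
      simp only [hq, hr, mul_assoc]
    have hpv : pV v = ∑ x, 1/(K:ℝ) * r x := by
      simp only [hpV]
      exact Finset.sum_congr rfl fun x _ => hqr x
    rcases eq_or_lt_of_le (hpVnn v) with h0 | h0
    · -- pV v = 0 : left side vanishes
      have hz : ∑ x, (q x v)^α * (pV v)^(1-α) = 0 := by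
        rw [← h0]
        simp [Real.zero_rpow (show (1-α : ℝ) ≠ 0 by linarith)]
      rw [hz]
      have := hGnn v
      positivity
    · have hold := holder_step univ (fun _ => 1/(K:ℝ)) r α hα1 hα2
        (fun x _ => by positivity) (fun x _ => hrnn x)
      rw [← hpv] at hold
      have e1 : ∑ x, (q x v)^α * (pV v)^(1-α)
          = (1/(K:ℝ))^(α-1) * (pV v)^(1-α) * ∑ x, 1/(K:ℝ) * r x ^ α := by
        rw [Finset.mul_sum]
        refine Finset.sum_congr rfl fun x _ => ?_
        rw [hqr x, Real.mul_rpow (by positivity) (hrnn x), hKsplit]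
        ring
      have hmono : (0:ℝ) ≤ (1/(K:ℝ))^(α-1) * (pV v)^(1-α) :=
        mul_nonneg (Real.rpow_nonneg (by positivity) _) (Real.rpow_nonneg (hpVnn v) _)
      calc ∑ x, (q x v)^α * (pV v)^(1-α)
          = (1/(K:ℝ))^(α-1) * (pV v)^(1-α) * ∑ x, 1/(K:ℝ) * r x ^ α := e1
        _ ≤ (1/(K:ℝ))^(α-1) * (pV v)^(1-α)
              * ((pV v)^(α-1) * (∑ x, 1/(K:ℝ) * r x ^ (1/(2-α)))^(2-α)) := by
            exact mul_le_mul_of_nonneg_left hold hmono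
        _ = (K:ℝ)^(1-α) * G v := by
            have hpp : (pV v)^(1-α) * (pV v)^(α-1) = 1 := by
              rw [← Real.rpow_add h0]
              norm_num
            have hkk : ((1:ℝ)/(K:ℝ))^(α-1) = (K:ℝ)^(1-α) := by
              rw [one_div, ← Real.rpow_neg_one (K:ℝ), ← Real.rpow_mul hK0.le,
                show (-1)*(α-1) = 1-α by ring]
            have key : ∀ T : ℝ,
                (1/(K:ℝ))^(α-1) * (pV v)^(1-α) * ((pV v)^(α-1) * T) = (K:ℝ)^(1-α) * T := by
              intro T
              rw [show (1/(K:ℝ))^(α-1) * (pV v)^(1-α) * ((pV v)^(α-1) * T)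
                  = (1/(K:ℝ))^(α-1) * T * ((pV v)^(1-α) * (pV v)^(α-1)) from by ring,
                hpp, mul_one, hkk]
            simp only [hG, hr]
            exact key _
  ------------------------------------------------------------------
  -- STEP D : grouping the bins
  ------------------------------------------------------------------
  have stepD : ∑ v : Fin K × Fin M, G v
      ≤ (M:ℝ)^(α-1) * ∑ y, (∑ x, (1/(K:ℝ)) * (W x y) ^ (1/(2-α))) ^ (2-α) := by
    rw [Fintype.sum_prod_type, Finset.mul_sum]
    refine Finset.sum_le_sum fun y _ => ?_
    set c : Fin M → ℝ :=
      fun z => ∑ x, 1/(K:ℝ) * (W x y)^(1/(2-α)) * (if f x = z then 1 else 0) with hc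
    have hcnn : ∀ z, 0 ≤ c z := by
      intro z
      simp only [hc]
      refine Finset.sum_nonneg fun x _ => ?_
      have h1 : (0:ℝ) ≤ (W x y)^(1/(2-α)) := Real.rpow_nonneg (hW x y).le _
      have h2 : (0:ℝ) ≤ (if f x = z then (1:ℝ) else 0) := by positivity
      exact mul_nonneg (mul_nonneg (by positivity) h1) h2
    have hGc : ∀ z, G (y, z) = (c z)^(2-α) := by
      intro z
      simp only [hG, hc]
      congr 1
      refine Finset.sum_congr rfl fun x _ => ?_
      by_cases h : f x = z
      · rw [if_pos h, mul_one, mul_one]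
      · rw [if_neg h, mul_zero, Real.zero_rpow (ne_of_gt hβpos), mul_zero, mul_zero]
    have pm := pow_mean_upper univ c (2-α) h2α (by linarith) (fun z _ => hcnn z)
    rw [card_univ, Fintype.card_fin] at pm
    have hsumc : ∑ z, c z = ∑ x, 1/(K:ℝ) * (W x y)^(1/(2-α)) := by
      simp only [hc]
      rw [Finset.sum_comm]
      refine Finset.sum_congr rfl fun x _ => ?_
      simp [mul_ite, Finset.sum_ite_eq]
    calc ∑ z, G (y,z) = ∑ z, (c z)^(2-α) := Finset.sum_congr rfl fun z _ => hGc z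
      _ ≤ (M:ℝ)^(1-(2-α)) * (∑ z, c z)^(2-α) := pm
      _ = (M:ℝ)^(α-1) * (∑ x, (1/(K:ℝ)) * (W x y)^(1/(2-α)))^(2-α) := by
          rw [hsumc, show (1-(2-α) : ℝ) = α - 1 from by ring]
  ------------------------------------------------------------------
  -- assembling the chain
  ------------------------------------------------------------------
  have chain : (1-D)^α + ((K:ℝ)-1)^(1-α) * D^α
      ≤ (K:ℝ)^(1-α) * ((M:ℝ)^(α-1) * ∑ y, (∑ x, (1/(K:ℝ)) * (W x y) ^ (1/(2-α))) ^ (2-α)) :=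
    stepA.trans (stepB.trans (stepC.trans
      (mul_le_mul_of_nonneg_left stepD (Real.rpow_nonneg hK0.le _))))
  have hdiv : D^α / ((K:ℝ)-1)^(α-1) = ((K:ℝ)-1)^(1-α) * D^α := by
    rw [div_eq_mul_inv, ← Real.rpow_neg (by linarith : (0:ℝ) ≤ (K:ℝ)-1),
      show (-(α-1) : ℝ) = 1-α from by ring, mul_comm]
  rw [hdiv]
  calc (K:ℝ)^(α-1) * ((1-D)^α + ((K:ℝ)-1)^(1-α) * D^α)
      ≤ (K:ℝ)^(α-1) * ((K:ℝ)^(1-α)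
          * ((M:ℝ)^(α-1) * ∑ y, (∑ x, (1/(K:ℝ)) * (W x y) ^ (1/(2-α))) ^ (2-α))) :=
        mul_le_mul_of_nonneg_left chain (Real.rpow_nonneg hK0.le _)
    _ = (M:ℝ)^(α-1) * ∑ y, (∑ x, (1/(K:ℝ)) * (W x y) ^ (1/(2-α))) ^ (2-α) := by
        rw [← mul_assoc, ← Real.rpow_add hK0, show (α-1) + (1-α) = 0 from by ring,
          Real.rpow_zero, one_mul]
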